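/- arXiv:0705.1107 — 2 statements merged into one kernel-verified Lean document; each statement's English description precedes it below -/
import Mathlib

section
/- Let V:ℝ³→ℝ be continuously differentiable, nonnegative, homogeneous of degree s>2 and satisfy W(x) = V(x) − r²/4 → ∞ as |x|→∞, where r = √(x₁²+x₂²). Let M be the set of minimizers of W and m = −min_{ℝ³} W ≥ 0. Then M is compact and every point of M has the same radial coordinate r₀ = 2√(s·m/(s−2)). Moreover, for Ω > 0, every minimizer of W_Ω(x) = V(x) − Ω²r²/4 has radial coordinate r_Ω = Ω^{2/(s−2)} r₀. -/
noncomputable section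

open MeasureTheory Filter Topology Real

abbrev E3 := EuclideanSpace ℝ (Fin 3)

/-- distance from the z-axis -/
def radial (x : E3) : ℝ := Real.sqrt ((x 0)^2 + (x 1)^2)

/-- k-th component of the vector potential `A_Ω(x) = (Ω/2)(e_z ∧ x)` -/
def Avec (Ω : ℝ) (x : E3) : Fin 3 → ℝ := ![-(Ω/2) * x 1, (Ω/2) * x 0, 0]

/-- covariant (magnetic) derivative `(∂_k - i A_k) φ` -/
def covD (Ω : ℝ) (φ : E3 → ℂ) (k : Fin 3) : E3 → ℂ := fun x =>
  fderiv ℝ φ x (EuclideanSpace.single k 1) - Complex.I * (Avec Ω x k : ℂ) * φ x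

/-- `|(∇ - iA_Ω)φ|²` -/
def magKin (Ω : ℝ) (φ : E3 → ℂ) (x : E3) : ℝ := ∑ k : Fin 3, ‖covD Ω φ k x‖^2

/-- homogeneity of degree `s`: `V (λ x) = λ^s V x` for `λ > 0` -/
def HomogeneousOfDegree (V : E3 → ℝ) (s : ℝ) : Prop :=
  ∀ l : ℝ, 0 < l → ∀ x : E3, V (l • x) = l ^ s * V x

/-- trapping: `V - Ω² r²/4 → ∞` as `|x| → ∞`, for every `Ω ≥ 0` -/
def IsTrapping (V : E3 → ℝ) : Prop :=
  ∀ Ω : ℝ, 0 ≤ Ω →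
    Tendsto (fun x : E3 => V x - Ω^2 * (radial x)^2 / 4) (cocompact E3) atTop

/-- Thomas-Fermi functional -/
def TFtot (V : E3 → ℝ) (g Ω : ℝ) (ρ : E3 → ℝ) : ℝ :=
  ∫ x : E3, (V x * ρ x - Ω^2 * (radial x)^2 / 4 * ρ x + g * (ρ x)^2)

/-- admissible (normalized) TF densities -/
def TFadm (V : E3 → ℝ) (ρ : E3 → ℝ) : Prop :=
  (∀ x, 0 ≤ ρ x) ∧ MemLp ρ 2 volume ∧
    Integrable (fun x => V x * ρ x) ∧
    Integrable (fun x => (radial x)^2 * ρ x) ∧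
    (∫ x : E3, ρ x) = 1

/-- Thomas-Fermi ground state energy `E^TF_{g,Ω}` -/
def TFenergy (V : E3 → ℝ) (g Ω : ℝ) : ℝ :=
  sInf {e : ℝ | ∃ ρ : E3 → ℝ, TFadm V ρ ∧ TFtot V g Ω ρ = e}

def IsTFMinimizer (V : E3 → ℝ) (g Ω : ℝ) (ρ : E3 → ℝ) : Prop :=
  TFadm V ρ ∧ TFtot V g Ω ρ = TFenergy V g Ω

/-- the `L^∞` (essential supremum) norm -/
def supNorm (ρ : E3 → ℝ) : ℝ := (eLpNorm ρ ⊤ volume).toReal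

/-- Gross-Pitaevskii functional -/
def GPtot (V : E3 → ℝ) (g Ω : ℝ) (φ : E3 → ℂ) : ℝ :=
  ∫ x : E3, (magKin Ω φ x + V x * ‖φ x‖^2 - Ω^2 * (radial x)^2 / 4 * ‖φ x‖^2 + g * ‖φ x‖^4)

/-- admissible (normalized) GP states -/
def GPadm (V : E3 → ℝ) (Ω : ℝ) (φ : E3 → ℂ) : Prop :=
  Differentiable ℝ φ ∧ MemLp φ 4 volume ∧
    Integrable (fun x => V x * ‖φ x‖^2) ∧
    Integrable (fun x => (radial x)^2 * ‖φ x‖^2) ∧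
    Integrable (fun x => magKin Ω φ x) ∧
    (∫ x : E3, ‖φ x‖^2) = 1

/-- Gross-Pitaevskii ground state energy `E^GP_{g,Ω}` -/
def GPenergy (V : E3 → ℝ) (g Ω : ℝ) : ℝ :=
  sInf {e : ℝ | ∃ φ : E3 → ℂ, GPadm V Ω φ ∧ GPtot V g Ω φ = e}

/-- sum of the pair interactions `Σ_{i<j} v(|x_i - x_j|)` -/
def pairSum (v : ℝ → ℝ) {N : ℕ} (X : Fin N → E3) : ℝ :=
  ∑ i : Fin N, ∑ j : Fin N, if i < j then v (dist (X i) (X j)) else 0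

/-- many-body magnetic kinetic energy density `Σ_j |(∇_j - iA_Ω(x_j))Ψ|²` -/
def qmKin (Ω : ℝ) {N : ℕ} (Ψ : (Fin N → E3) → ℂ) (X : Fin N → E3) : ℝ :=
  ∑ j : Fin N, ∑ k : Fin 3,
    ‖fderiv ℝ Ψ X (Pi.single j (EuclideanSpace.single k 1))
      - Complex.I * (Avec Ω (X j) k : ℂ) * Ψ X‖^2

/-- integrand of the many-body quadratic form `⟨Ψ, H_N Ψ⟩` -/
def qmDensity (V : E3 → ℝ) (v : ℝ → ℝ) (Ω : ℝ) {N : ℕ}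
    (Ψ : (Fin N → E3) → ℂ) (X : Fin N → E3) : ℝ :=
  qmKin Ω Ψ X
    + ((∑ j : Fin N, (V (X j) - Ω^2 * (radial (X j))^2 / 4)) + pairSum v X) * ‖Ψ X‖^2

/-- admissible (symmetric, normalized, regular) many-body wave functions -/
def QMadm (N : ℕ) (Ψ : (Fin N → E3) → ℂ) : Prop :=
  (∀ σ : Equiv.Perm (Fin N), ∀ X : Fin N → E3, Ψ (X ∘ σ) = Ψ X) ∧
    Differentiable ℝ Ψ ∧ MemLp Ψ 2 volume ∧
    (∫ X : Fin N → E3, ‖Ψ X‖^2) = 1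

/-- many-body ground state energy `E^QM_{g,Ω}(N)`: infimum of the quadratic form of `H_N`
over normalized symmetric states in the form domain -/
def QMenergy (V : E3 → ℝ) (v : ℝ → ℝ) (Ω : ℝ) (N : ℕ) : ℝ :=
  sInf {e : ℝ | ∃ Ψ : (Fin N → E3) → ℂ, QMadm N Ψ ∧
    Integrable (qmDensity V v Ω Ψ) ∧ (∫ X : Fin N → E3, qmDensity V v Ω Ψ X) = e}

/-- `w` has scattering length `a` -/
def HasScatteringLength (w : ℝ → ℝ) (a : ℝ) : Prop :=
  ∃ u : ℝ → ℝ, u 0 = 0 ∧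
    (∀ r : ℝ, 0 < r → DifferentiableAt ℝ u r) ∧
    (∀ r : ℝ, 0 < r → HasDerivAt (deriv u) (w r * u r / 2) r) ∧
    Tendsto (deriv u) atTop (nhds 1) ∧
    Tendsto (fun r => r - u r) atTop (nhds a)

def HasFiniteRange (w : ℝ → ℝ) : Prop := ∃ R : ℝ, 0 < R ∧ ∀ r : ℝ, R ≤ r → w r = 0

/-- the scaled interaction `v(r) = a⁻² v₁(r/a)` (with scattering length `a`) -/
def scaledInteraction (v₁ : ℝ → ℝ) (a : ℝ) : ℝ → ℝ := fun r => (a^2)⁻¹ * v₁ (r / a)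

/-- normalized one-particle density of a many-body wave function -/
def oneDensity (N : ℕ) (Ψ : (Fin N → E3) → ℂ) (x : E3) : ℝ :=
  ∫ Y : {i : Fin N // i.val ≠ 0} → E3,
    ‖Ψ (fun i => if h : i.val = 0 then x else Y ⟨i, h⟩)‖^2

lemma radial_smul (c : ℝ) (hc : 0 ≤ c) (x : E3) : radial (c • x) = c * radial x := by
  unfold radial
  have h0 : (c • x) 0 = c * x 0 := rfl
  have h1 : (c • x) 1 = c * x 1 := rfl
  rw [h0, h1, mul_pow, mul_pow, ← mul_add, Real.sqrt_mul (by positivity), Real.sqrt_sq hc]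

lemma radial_zero' : radial 0 = 0 := by simp [radial]

lemma continuous_radial : Continuous radial := by
  apply Real.continuous_sqrt.comp; fun_prop

lemma euler (V : E3 → ℝ) (s : ℝ) (hV_hom : HomogeneousOfDegree V s)
    (x : E3) (hx : ∀ y, V x - (radial x)^2/4 ≤ V y - (radial y)^2/4) :
    s * V x = (radial x)^2 / 2 := by
  set r := radial x with hr
  set f : ℝ → ℝ := fun l => V x * l ^ s - r^2/4 * l^2 with hf
  have hmin : IsLocalMin f 1 := by
    filter_upwards [Ioi_mem_nhds (zero_lt_one)] with l hl
    have h1 : V (l • x) = l ^ s * V x := hV_hom l hl x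
    have h2 : radial (l • x) = l * r := radial_smul l hl.le x
    have h3 := hx (l • x)
    rw [h1, h2] at h3
    simp only [hf, Real.one_rpow]
    nlinarith [h3]
  have hd1 : HasDerivAt (fun l : ℝ => l ^ s) (s * (1:ℝ) ^ (s-1)) 1 :=
    Real.hasDerivAt_rpow_const (Or.inl one_ne_zero)
  have hd2 : HasDerivAt (fun l : ℝ => l ^ 2) ((2:ℕ) * (1:ℝ) ^ (2-1)) 1 := hasDerivAt_pow 2 1
  have hd : HasDerivAt f (V x * s - r^2/2) 1 := by
    have := (hd1.const_mul (V x)).sub (hd2.const_mul (r^2/4))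
    convert this using 1
    case e'_9 => simp [Real.one_rpow]; ring
    all_goals rfl
  have h0 := hmin.hasDerivAt_eq_zero hd
  linarith [h0]

lemma V_zero (V : E3 → ℝ) (s : ℝ) (hs : 2 < s) (hV_hom : HomogeneousOfDegree V s) :
    V 0 = 0 := by
  have h := hV_hom 2 two_pos 0
  rw [smul_zero] at h
  have h2 : (1:ℝ) < (2:ℝ) ^ s := by
    rw [show (1:ℝ) = (2:ℝ) ^ (0:ℝ) by simp]
    exact Real.rpow_lt_rpow_left_iff (by norm_num) |>.mpr (by linarith)
  nlinarith

/-- **Lemma 3.1** (`M` is a subset of a cylinder): the set `M` of minimizers of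
`W(x) = V(x) - r²/4` is compact, `m = -min W ≥ 0`, every point of `M` has radial
coordinate `r₀ = 2√(s m/(s-2))`, and for `Ω > 0` every minimizer of
`W_Ω(x) = V(x) - Ω² r²/4` has radial coordinate `r_Ω = Ω^{2/(s-2)} r₀`. -/
theorem minimizing_set_on_cylinder
    (V : E3 → ℝ) (s : ℝ)
    (hV_diff : ContDiff ℝ 1 V) (hV_nonneg : ∀ x, 0 ≤ V x)
    (hs : 2 < s) (hV_hom : HomogeneousOfDegree V s)
    (hW_trap : Tendsto (fun x : E3 => V x - (radial x)^2/4) (cocompact E3) atTop) :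
    IsCompact {x : E3 | ∀ y : E3, V x - (radial x)^2/4 ≤ V y - (radial y)^2/4} ∧
    0 ≤ -sInf (Set.range fun x : E3 => V x - (radial x)^2/4) ∧
    (∀ x ∈ {x : E3 | ∀ y : E3, V x - (radial x)^2/4 ≤ V y - (radial y)^2/4},
      radial x = 2 * Real.sqrt
        (s * (-sInf (Set.range fun y : E3 => V y - (radial y)^2/4)) / (s - 2))) ∧
    (∀ Ω : ℝ, 0 < Ω → ∀ x : E3,
      (∀ y : E3, V x - Ω^2 * (radial x)^2/4 ≤ V y - Ω^2 * (radial y)^2/4) →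
      radial x = Ω ^ ((2 : ℝ) / (s - 2)) *
        (2 * Real.sqrt
          (s * (-sInf (Set.range fun y : E3 => V y - (radial y)^2/4)) / (s - 2)))) := by
  set W : E3 → ℝ := fun x => V x - (radial x)^2/4 with hW
  have hWc : Continuous W := by
    exact (hV_diff.continuous).sub ((continuous_radial.pow 2).div_const 4)
  have hW0 : W 0 = 0 := by
    simp [hW, radial_zero', V_zero V s hs hV_hom]
  -- BddBelow
  have hbdd : BddBelow (Set.range W) := by
    have hev : ∀ᶠ x in cocompact E3, (0:ℝ) ≤ W x := hW_trap.eventually (eventually_ge_atTop 0)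
    obtain ⟨K, hK, hKs⟩ := mem_cocompact.mp hev
    obtain ⟨b, hb⟩ := (hK.image hWc).bddBelow
    refine ⟨min b 0, ?_⟩
    rintro _ ⟨y, rfl⟩
    by_cases hy : y ∈ K
    · exact le_trans (min_le_left _ _) (hb ⟨y, hy, rfl⟩)
    · exact le_trans (min_le_right _ _) (hKs hy)
  have hs0 : s ≠ 0 := by linarith
  have hs2 : s - 2 ≠ 0 := by intro h; linarith [h]
  -- for any minimizer, radial formula
  have hrad : ∀ x : E3, (∀ y, W x ≤ W y) →
      radial x = 2 * Real.sqrt (s * (-sInf (Set.range W)) / (s - 2)) := by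
    intro x hx
    have hInf : sInf (Set.range W) = W x :=
      le_antisymm (csInf_le hbdd ⟨x, rfl⟩)
        (le_csInf ⟨W x, x, rfl⟩ (by rintro b ⟨y, rfl⟩; exact hx y))
    have he : s * V x = (radial x)^2 / 2 := euler V s hV_hom x hx
    have hVx : V x = (radial x)^2 / (2*s) := by field_simp at he ⊢; linarith
    have harg : s * (-sInf (Set.range W)) / (s - 2) = (radial x / 2)^2 := by
      rw [hInf]
      simp only [hW, hVx]
      field_simp
      ring
    have hrnn : 0 ≤ radial x := Real.sqrt_nonneg _
    rw [harg, Real.sqrt_sq (div_nonneg hrnn (by norm_num))]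
    ring
  refine ⟨?_, ?_, ?_, ?_⟩
  · -- compactness
    have hev : ∀ᶠ x in cocompact E3, (1:ℝ) ≤ W x := hW_trap.eventually (eventually_ge_atTop 1)
    obtain ⟨K, hK, hKs⟩ := mem_cocompact.mp hev
    have hsub : {x : E3 | ∀ y : E3, W x ≤ W y} ⊆ K := by
      intro x hx
      by_contra hxK
      have h1 : (1:ℝ) ≤ W x := hKs hxK
      have h2 : W x ≤ W 0 := hx 0
      rw [hW0] at h2; linarith
    have hcl : IsClosed {x : E3 | ∀ y : E3, W x ≤ W y} := by
      have : {x : E3 | ∀ y : E3, W x ≤ W y} = ⋂ y, {x : E3 | W x ≤ W y} := by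
        ext x; simp
      rw [this]
      exact isClosed_iInter fun y => isClosed_le hWc continuous_const
    exact hK.of_isClosed_subset hcl hsub
  · -- m ≥ 0
    have : sInf (Set.range W) ≤ 0 := by
      have := csInf_le hbdd ⟨0, rfl⟩
      rwa [hW0] at this
    linarith
  · exact fun x hx => hrad x hx
  · -- part 4
    intro Ω hΩ x hx
    set c : ℝ := Ω ^ ((2:ℝ)/(s-2)) with hc
    have hcpos : 0 < c := Real.rpow_pos_of_pos hΩ _
    have hcs : Ω^2 * c^2 = c ^ s := by
      rw [← Real.rpow_natCast Ω 2, ← Real.rpow_natCast c 2, hc,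
        ← Real.rpow_mul hΩ.le, ← Real.rpow_mul hΩ.le, ← Real.rpow_add hΩ]
      congr 1
      push_cast
      field_simp
      ring
    have hkey : ∀ z : E3, V (c • z) - Ω^2 * (radial (c • z))^2/4 = c ^ s * W z := by
      intro z
      rw [hV_hom c hcpos z, radial_smul c hcpos.le z]
      simp only [hW]
      nlinarith [hcs]
    have hcspos : 0 < c ^ s := Real.rpow_pos_of_pos hcpos s
    have hy : ∀ z, W (c⁻¹ • x) ≤ W z := by
      intro z
      have h1 := hx (c • z)
      have h2 : c • (c⁻¹ • x) = x := smul_inv_smul₀ hcpos.ne' x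
      have h3 := hkey (c⁻¹ • x)
      rw [h2] at h3
      rw [hkey z, h3] at h1
      exact le_of_mul_le_mul_left h1 hcspos
    have hr := hrad (c⁻¹ • x) hy
    have : radial x = c * radial (c⁻¹ • x) := by
      conv_lhs => rw [← smul_inv_smul₀ hcpos.ne' x]
      exact radial_smul c hcpos.le _
    rw [this, hr]
end
end

section
/- Let V:ℝ³→ℝ be continuous, nonnegative, homogeneous of degree s>2 and satisfy V(x) − Ω²r²/4 → ∞ as |x|→∞, and let g > 0, Ω ≥ 0. Let φ^GP be a normalized minimizer of the GP functional which is twice continuously differentiable and satisfies the GP equation [−(∇ − iA_Ω)² + V − Ω²r²/4 + 2g|φ^GP|²] φ^GP = μ^GP φ^GP with μ^GP = E^GP_{g,Ω} + 2g ∫ |φ^GP|⁴, and suppose the modulus |φ^GP| attains its maximum. Then the GP density ρ^GP = |φ^GP|² satisfies 2g ‖ρ^GP‖_∞ ≤ μ^GP − inf_{x∈ℝ³} (V(x) − Ω²r²/4). -/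
noncomputable section

open MeasureTheory Filter Topology Real

lemma radial_sq_cont : Continuous (fun x : E3 => (radial x)^2) := by
  have hre : (fun x : E3 => (radial x)^2) = fun x : E3 => (x 0)^2 + (x 1)^2 := by
    funext x; rw [radial, Real.sq_sqrt (by positivity)]
  rw [hre]
  have h0 : Continuous (fun x : E3 => x 0) :=
    (EuclideanSpace.proj (0 : Fin 3) : E3 →L[ℝ] ℝ).continuous
  have h1 : Continuous (fun x : E3 => x 1) :=
    (EuclideanSpace.proj (1 : Fin 3) : E3 →L[ℝ] ℝ).continuous
  fun_prop

lemma avec_line (Ω : ℝ) (k : Fin 3) (x₀ e : E3) (t : ℝ) :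
    Avec Ω (x₀ + t • e) k = Avec Ω x₀ k + t * Avec Ω e k := by
  fin_cases k <;>
    simp [Avec, PiLp.add_apply, PiLp.smul_apply, smul_eq_mul] <;> ring

lemma avec_diff (Ω : ℝ) (k : Fin 3) : Differentiable ℝ (fun x : E3 => Avec Ω x k) := by
  have h0 : Differentiable ℝ (fun x : E3 => x 0) :=
    (EuclideanSpace.proj (0 : Fin 3) : E3 →L[ℝ] ℝ).differentiable
  have h1 : Differentiable ℝ (fun x : E3 => x 1) :=
    (EuclideanSpace.proj (1 : Fin 3) : E3 →L[ℝ] ℝ).differentiable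
  fin_cases k <;> simp [Avec]
  · exact h1.const_mul _
  · exact h0.const_mul _

lemma key_ineq (Ω : ℝ) (φ : E3 → ℂ) (hφ : ContDiff ℝ 2 φ) (x₀ : E3)
    (hmax : ∀ x : E3, ‖φ x‖ ≤ ‖φ x₀‖) (k : Fin 3) :
    ((starRingEnd ℂ) (φ x₀) * covD Ω (covD Ω φ k) k x₀).re ≤ 0 := by
  have hφd : Differentiable ℝ φ := hφ.differentiable (by norm_num)
  set e : E3 := EuclideanSpace.single k 1 with he
  set L : ℝ → E3 := fun t => x₀ + t • e with hL
  have hLd : ∀ t : ℝ, HasDerivAt L e t := by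
    intro t
    simpa [hL] using ((hasDerivAt_id t).smul_const e).const_add x₀
  have hL0 : L 0 = x₀ := by simp [hL]
  set u : ℝ → ℂ := fun t => φ (L t) with hu
  set du : ℝ → ℂ := fun t => fderiv ℝ φ (L t) e with hdu
  have hud : ∀ t, HasDerivAt u (du t) t := fun t =>
    ((hφd (L t)).hasFDerivAt).comp_hasDerivAt t (hLd t)
  have hG : Differentiable ℝ (fun x => fderiv ℝ φ x e) :=
    ((hφ.fderiv_right (m := 1) (by norm_num)).differentiable (by norm_num)).clm_apply (differentiable_const e)
  set w : ℂ := fderiv ℝ (fun x => fderiv ℝ φ x e) x₀ e with hw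
  have hdud : HasDerivAt du w 0 := by
    have hf : HasFDerivAt (fun x => fderiv ℝ φ x e)
        (fderiv ℝ (fun x => fderiv ℝ φ x e) x₀) (L 0) := hL0 ▸ (hG x₀).hasFDerivAt
    exact hf.comp_hasDerivAt 0 (hLd 0)
  set a : ℝ → ℝ := fun t => Avec Ω (L t) k with ha
  set a' : ℝ := Avec Ω e k with ha'
  have had : HasDerivAt a a' 0 := by
    have hae : a = fun t => Avec Ω x₀ k + t * Avec Ω e k := funext fun t => avec_line Ω k x₀ e t
    rw [hae]
    simpa using ((hasDerivAt_id (0:ℝ)).mul_const (Avec Ω e k)).const_add (Avec Ω x₀ k)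
  set F : ℝ → ℂ := fun t => du t - Complex.I * (((a t : ℝ) : ℂ) * u t) with hF
  have hFeq : (fun t => covD Ω φ k (L t)) = F := by
    funext t
    simp only [covD, hF, hdu, ha, hu, ← he]
    ring
  have hF' : HasDerivAt F (w - Complex.I * (((a' : ℝ):ℂ) * u 0 + ((a 0 : ℝ):ℂ) * du 0)) 0 := by
    have h1 : HasDerivAt (fun t => ((a t : ℝ) : ℂ)) ((a' : ℝ) : ℂ) 0 := had.ofReal_comp
    have h2 := h1.mul (hud 0)
    exact hdud.sub (h2.const_mul Complex.I)
  have hαd : Differentiable ℝ (fun x : E3 => ((Avec Ω x k : ℝ) : ℂ)) :=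
    Complex.ofRealCLM.differentiable.comp (avec_diff Ω k)
  have hcovd : DifferentiableAt ℝ (covD Ω φ k) x₀ := by
    have hce : covD Ω φ k = fun x =>
        fderiv ℝ φ x e - Complex.I * (((Avec Ω x k : ℝ):ℂ)) * φ x := rfl
    rw [hce]
    exact (hG x₀).sub (((differentiableAt_const Complex.I).mul (hαd x₀)).mul (hφd x₀))
  have hchain : HasDerivAt F (fderiv ℝ (covD Ω φ k) x₀ e) 0 := by
    have hf : HasFDerivAt (covD Ω φ k) (fderiv ℝ (covD Ω φ k) x₀) (L 0) :=
      hL0 ▸ hcovd.hasFDerivAt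
    have := hf.comp_hasDerivAt 0 (hLd 0)
    simp only [Function.comp_def] at this
    rwa [hFeq] at this
  have hw2 : fderiv ℝ (covD Ω φ k) x₀ e
      = w - Complex.I * (((a' : ℝ):ℂ) * u 0 + ((a 0 : ℝ):ℂ) * du 0) := hchain.unique hF'
  -- the scalar functions h and q
  set h : ℝ → ℝ := fun t => ((starRingEnd ℂ) (u t) * du t).re with hh
  set h' : ℝ := ((starRingEnd ℂ) (du 0) * du 0 + (starRingEnd ℂ) (u 0) * w).re with hh'
  have hhd : HasDerivAt h h' 0 := by
    have h1 : HasDerivAt (fun t => (starRingEnd ℂ) (u t)) ((starRingEnd ℂ) (du 0)) 0 := by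
      simpa [Complex.star_def] using (hud 0).star
    have h2 := h1.mul hdud
    have h3 := (Complex.reCLM.hasFDerivAt).comp_hasDerivAt 0 h2
    simp only [Function.comp_def, Complex.reCLM_apply] at h3
    exact h3
  set q : ℝ → ℝ := fun t => ‖u t‖^2 with hq
  have hqd : ∀ t, HasDerivAt q (2 * h t) t := by
    intro t
    have hre : HasDerivAt (fun t => (u t).re) ((du t).re) t := by
      simpa [Function.comp_def] using (Complex.reCLM.hasFDerivAt).comp_hasDerivAt t (hud t)
    have him : HasDerivAt (fun t => (u t).im) ((du t).im) t := by
      simpa [Function.comp_def] using (Complex.imCLM.hasFDerivAt).comp_hasDerivAt t (hud t)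
    have hqe : q = fun t => (u t).re * (u t).re + (u t).im * (u t).im := by
      funext t
      rw [hq]
      simp only [Complex.sq_norm, Complex.normSq_apply]
    rw [hqe]
    have := (hre.fun_mul hre).fun_add (him.fun_mul him)
    refine this.congr_deriv ?_
    simp only [hh, Complex.mul_re, Complex.conj_re, Complex.conj_im]
    ring
  have hqmax : ∀ t, q t ≤ q 0 := by
    intro t
    simp only [hq, hu, hL0]
    exact pow_le_pow_left₀ (norm_nonneg _) (hmax (L t)) 2
  have hh0 : h 0 = 0 := by
    have hloc : IsLocalMax q 0 := Filter.Eventually.of_forall hqmax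
    have := hloc.hasDerivAt_eq_zero (hqd 0)
    linarith
  have hh'le : h' ≤ 0 := by
    by_contra hc
    push_neg at hc
    have hslope := hasDerivAt_iff_tendsto_slope.mp hhd
    have h1 : ∀ᶠ t in 𝓝[≠] (0:ℝ), 0 < slope h 0 t := hslope.eventually (Ioi_mem_nhds hc)
    have h2 : ∀ᶠ t in 𝓝[>] (0:ℝ), 0 < h t := by
      have h2' : ∀ᶠ t in 𝓝[>] (0:ℝ), 0 < slope h 0 t :=
        h1.filter_mono (nhdsWithin_mono _ (fun x hx => ne_of_gt hx))
      filter_upwards [h2', self_mem_nhdsWithin] with t ht ht0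
      have hs : slope h 0 t = h t / t := by
        simp [slope_def_field, hh0]
      rw [hs] at ht
      have ht0' : (0:ℝ) < t := ht0
      have := mul_pos ht ht0'
      rwa [div_mul_cancel₀ _ (ne_of_gt ht0')] at this
    obtain ⟨δ, hδmem, hδ⟩ := mem_nhdsGT_iff_exists_Ioo_subset.mp h2
    have hδ0 : (0:ℝ) < δ := hδmem
    have hmono : StrictMonoOn q (Set.Icc 0 δ) := by
      apply strictMonoOn_of_deriv_pos (convex_Icc 0 δ)
      · exact fun t _ => (hqd t).continuousAt.continuousWithinAt
      · intro t ht
        rw [interior_Icc] at ht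
        rw [(hqd t).deriv]
        have ht' : 0 < h t := hδ ht
        linarith
    have : q 0 < q δ := hmono (Set.left_mem_Icc.mpr hδ0.le)
      (Set.right_mem_Icc.mpr hδ0.le) hδ0
    exact absurd (hqmax δ) (not_le.mpr this)
  -- assemble
  have hrew : ((starRingEnd ℂ) (u 0) * w).re ≤ -‖du 0‖^2 := by
    have hdd : ((starRingEnd ℂ) (du 0) * du 0).re = ‖du 0‖^2 := by
      rw [← Complex.normSq_eq_conj_mul_self]
      simp [Complex.sq_norm]
    have h5 : ((starRingEnd ℂ) (du 0) * du 0 + (starRingEnd ℂ) (u 0) * w).re ≤ 0 := hh'le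
    rw [Complex.add_re] at h5
    linarith
  have hA0 : Avec Ω x₀ k = a 0 := by rw [ha]; simp only [hL0]
  have hF0 : covD Ω φ k x₀ = F 0 := by
    have := congrFun hFeq 0
    rwa [hL0] at this
  have hcov2 : covD Ω (covD Ω φ k) k x₀
      = w - Complex.I * (((a' : ℝ):ℂ) * u 0 + ((a 0 : ℝ):ℂ) * du 0)
        - Complex.I * ((a 0 : ℝ):ℂ) * (du 0 - Complex.I * (((a 0 : ℝ):ℂ) * u 0)) := by
    show fderiv ℝ (covD Ω φ k) x₀ e - Complex.I * ((Avec Ω x₀ k : ℝ):ℂ) * covD Ω φ k x₀ = _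
    rw [hw2, hA0, hF0]
  have hφx₀ : φ x₀ = u 0 := by show φ x₀ = φ (L 0); rw [hL0]
  have himb : |((starRingEnd ℂ) (u 0) * du 0).im| ≤ ‖u 0‖ * ‖du 0‖ := by
    calc |((starRingEnd ℂ) (u 0) * du 0).im| ≤ ‖(starRingEnd ℂ) (u 0) * du 0‖ :=
          Complex.abs_im_le_norm _
      _ = ‖u 0‖ * ‖du 0‖ := by
          simp [map_mul, Complex.norm_conj]
  have hval : ((starRingEnd ℂ) (u 0) * covD Ω (covD Ω φ k) k x₀).re
      = ((starRingEnd ℂ) (u 0) * w).re + 2 * (a 0) * ((starRingEnd ℂ) (u 0) * du 0).im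
        - (a 0)^2 * ‖u 0‖^2 := by
    rw [hcov2]
    have hns : ‖u 0‖^2 = (u 0).re * (u 0).re + (u 0).im * (u 0).im := by
      simp only [Complex.sq_norm, Complex.normSq_apply]
    rw [hns]
    simp only [Complex.mul_re, Complex.mul_im, Complex.sub_re, Complex.sub_im,
      Complex.add_re, Complex.add_im, Complex.I_re, Complex.I_im, Complex.ofReal_re,
      Complex.ofReal_im, Complex.conj_re, Complex.conj_im]
    ring
  rw [hφx₀, hval]
  obtain ⟨him1, him2⟩ := abs_le.mp himb
  have h2a : 2 * a 0 * ((starRingEnd ℂ) (u 0) * du 0).im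
      ≤ (a 0)^2 * ‖u 0‖^2 + ‖du 0‖^2 := by
    rcases le_or_gt 0 (a 0) with hA | hA
    · nlinarith [sq_nonneg (a 0 * ‖u 0‖ - ‖du 0‖),
        mul_le_mul_of_nonneg_left him2 (by linarith : (0:ℝ) ≤ 2 * a 0)]
    · nlinarith [sq_nonneg (a 0 * ‖u 0‖ + ‖du 0‖),
        mul_le_mul_of_nonpos_left him1 (by linarith : 2 * a 0 ≤ 0)]
  linarith


/-- (Bound on the GP density via the maximum principle, proof of Proposition 4.2):
if `φ^GP` is a smooth normalized GP minimizer satisfying the GP equation with chemical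
potential `μ^GP = E^GP_{g,Ω} + 2g∫|φ^GP|⁴`, and if `|φ^GP|` attains its maximum, then
`2g‖ρ^GP‖_∞ ≤ μ^GP - inf (V - Ω²r²/4)`. -/
theorem gp_density_sup_bound
    (V : E3 → ℝ) (s : ℝ)
    (hV_cont : Continuous V) (hV_nonneg : ∀ x, 0 ≤ V x)
    (hs : 2 < s) (hV_hom : HomogeneousOfDegree V s) (hV_trap : IsTrapping V)
    (g Ω : ℝ) (hg : 0 < g) (hΩ : 0 ≤ Ω)
    (φ : E3 → ℂ) (hφ_smooth : ContDiff ℝ 2 φ)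
    (hφ_adm : GPadm V Ω φ)
    (hφ_min : GPtot V g Ω φ = GPenergy V g Ω)
    (μ : ℝ)
    (hμ : μ = GPenergy V g Ω + 2 * g * ∫ x : E3, ‖φ x‖^4)
    -- the GP (variational) equation `[-(∇ - iA_Ω)² + V - Ω²r²/4 + 2g|φ|²]φ = μφ`:
    (hGPeq : ∀ x : E3,
      -(∑ k : Fin 3, covD Ω (covD Ω φ k) k x)
        + ((V x - Ω^2 * (radial x)^2/4 + 2 * g * ‖φ x‖^2 : ℝ) : ℂ) * φ x
      = (μ : ℂ) * φ x)
    (hφ_max : ∃ x₀ : E3, ∀ x : E3, ‖φ x‖ ≤ ‖φ x₀‖) :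
    2 * g * supNorm (fun x => ‖φ x‖^2) ≤
      μ - sInf (Set.range fun x : E3 => V x - Ω^2 * (radial x)^2/4) := by
  obtain ⟨x₀, hx₀⟩ := hφ_max
  have hM0 : 0 < ‖φ x₀‖ := by
    by_contra hcon
    push_neg at hcon
    have hz : ∀ x, φ x = 0 := fun x => norm_le_zero_iff.mp ((hx₀ x).trans hcon)
    have h1 := hφ_adm.2.2.2.2.2
    simp [hz] at h1
  -- pointwise bound at the maximum via the GP equation and the key inequality
  set z := φ x₀ with hzdef
  have hkey : V x₀ - Ω^2 * (radial x₀)^2/4 + 2 * g * ‖φ x₀‖^2 ≤ μ := by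
    have hS : (∑ k : Fin 3, covD Ω (covD Ω φ k) k x₀)
        = (((V x₀ - Ω^2 * (radial x₀)^2/4 + 2 * g * ‖φ x₀‖^2 : ℝ) : ℂ) - (μ:ℂ)) * z := by
      linear_combination (-1 : ℂ) * (hGPeq x₀)
    have hsum : ((starRingEnd ℂ) z * ∑ k : Fin 3, covD Ω (covD Ω φ k) k x₀).re ≤ 0 := by
      rw [Finset.mul_sum, Complex.re_sum]
      exact Finset.sum_nonpos fun k _ => key_ineq Ω φ hφ_smooth x₀ hx₀ k
    rw [hS] at hsum
    have hre : ((starRingEnd ℂ) z *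
        ((((V x₀ - Ω^2 * (radial x₀)^2/4 + 2 * g * ‖φ x₀‖^2 : ℝ) : ℂ) - (μ:ℂ)) * z)).re
        = ((V x₀ - Ω^2 * (radial x₀)^2/4 + 2 * g * ‖φ x₀‖^2) - μ) * ‖z‖^2 := by
      have hcomm : (starRingEnd ℂ) z *
          ((((V x₀ - Ω^2 * (radial x₀)^2/4 + 2 * g * ‖φ x₀‖^2 : ℝ) : ℂ) - (μ:ℂ)) * z)
          = ((((V x₀ - Ω^2 * (radial x₀)^2/4 + 2 * g * ‖φ x₀‖^2 : ℝ) : ℂ) - (μ:ℂ)))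
            * ((starRingEnd ℂ) z * z) := by ring
      rw [hcomm, ← Complex.normSq_eq_conj_mul_self, ← Complex.ofReal_sub,
        ← Complex.ofReal_mul, Complex.ofReal_re, Complex.normSq_eq_norm_sq]
    rw [hre] at hsum
    have hz2 : 0 < ‖z‖^2 := by positivity
    nlinarith [hsum, hz2]
  -- bound on the infimum
  have hfc : Continuous (fun x : E3 => V x - Ω^2 * (radial x)^2/4) :=
    hV_cont.sub ((continuous_const.mul radial_sq_cont).div_const 4)
  obtain ⟨xm, hxm⟩ := hfc.exists_forall_le (hV_trap Ω hΩ)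
  have hbdd : BddBelow (Set.range fun x : E3 => V x - Ω^2 * (radial x)^2/4) := by
    refine ⟨V xm - Ω^2 * (radial xm)^2/4, ?_⟩
    rintro y ⟨x, rfl⟩
    exact hxm x
  have hinf : sInf (Set.range fun x : E3 => V x - Ω^2 * (radial x)^2/4)
      ≤ V x₀ - Ω^2 * (radial x₀)^2/4 := csInf_le hbdd ⟨x₀, rfl⟩
  -- sup norm bound
  have hsup : supNorm (fun x => ‖φ x‖^2) ≤ ‖φ x₀‖^2 := by
    have hb : ∀ᵐ x ∂(volume : Measure E3), ‖‖φ x‖^2‖ ≤ ‖φ x₀‖^2 :=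
      Filter.Eventually.of_forall fun x => by
        rw [Real.norm_eq_abs, abs_of_nonneg (by positivity)]
        exact pow_le_pow_left₀ (norm_nonneg _) (hx₀ x) 2
    have h1 := eLpNormEssSup_le_of_ae_bound (μ := volume) hb
    rw [supNorm, eLpNorm_exponent_top]
    calc (eLpNormEssSup (fun x => ‖φ x‖^2) volume).toReal
        ≤ (ENNReal.ofReal (‖φ x₀‖^2)).toReal := ENNReal.toReal_mono ENNReal.ofReal_ne_top h1
      _ = ‖φ x₀‖^2 := ENNReal.toReal_ofReal (by positivity)
  calc 2 * g * supNorm (fun x => ‖φ x‖^2) ≤ 2 * g * ‖φ x₀‖^2 :=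
        mul_le_mul_of_nonneg_left hsup (by positivity)
    _ ≤ μ - sInf (Set.range fun x : E3 => V x - Ω^2 * (radial x)^2/4) := by linarith
end
end
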